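/- Let g : ℝ → ℝ be continuous with finite limits g(±∞) at ±∞ satisfying g(−∞) < g(u) < g(∞) for all u. Suppose u is a 2π-periodic C² solution of u'' + n²u + g(u) = f(t) for a continuous 2π-periodic f, where n ≥ 1 is an integer. Set A = ∫_0^{2π} f(t) cos(nt) dt and B = ∫_0^{2π} f(t) sin(nt) dt. Then √(A² + B²) < 2(g(∞) − g(−∞)). -/

import Mathlib

open Real Filter

theorem LL_abscos_per : Function.Periodic (fun x => |Real.cos x|) π := by
  intro x; simp [Real.cos_add_pi]

theorem LL_abscos_int : ∫ x in (0:ℝ)..π, |Real.cos x| = 2 := by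
  have h := LL_abscos_per.intervalIntegral_add_eq 0 (-(π/2))
  rw [zero_add] at h
  rw [h]
  have h2 : -(π/2) + π = π/2 := by ring
  rw [h2, intervalIntegral.integral_congr (g := Real.cos)]
  · norm_num [integral_cos]
  · intro x hx
    rw [Set.uIcc_of_le (by linarith [pi_pos])] at hx
    exact abs_of_nonneg (Real.cos_nonneg_of_mem_Icc hx)

theorem LL_int_abs_cos (n : ℕ) (hn : 1 ≤ n) (δ : ℝ) :
    ∫ t in (0:ℝ)..(2*π), |Real.cos (n*t - δ)| = 4 := by
  have hn0 : (n:ℝ) ≠ 0 := by positivity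
  calc ∫ t in (0:ℝ)..(2*π), |Real.cos (n*t - δ)|
      = ((n:ℝ)⁻¹) • ∫ y in ((n:ℝ)*0)..((n:ℝ)*(2*π)), (fun y => |Real.cos (y - δ)|) y :=
        intervalIntegral.integral_comp_mul_left (fun y => |Real.cos (y - δ)|) hn0
    _ = ((n:ℝ)⁻¹) • ∫ x in ((n:ℝ)*0 - δ)..((n:ℝ)*(2*π) - δ), |Real.cos x| := by
        rw [intervalIntegral.integral_comp_sub_right (fun y => |Real.cos y|) δ]
    _ = ((n:ℝ)⁻¹) • ((2*n : ℤ) • ∫ x in (0:ℝ)..π, |Real.cos x|) := by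
        have h3 : (n:ℝ)*(2*π) - δ = ((n:ℝ)*0 - δ) + (2*n : ℤ) • π := by
          rw [zsmul_eq_mul]; push_cast; ring
        rw [h3, LL_abscos_per.intervalIntegral_add_zsmul_eq (2*n) _
          (fun t₁ t₂ => (Real.continuous_cos.abs).intervalIntegrable t₁ t₂),
          LL_abscos_per.intervalIntegral_add_eq ((n:ℝ)*0 - δ) 0, zero_add]
    _ = 4 := by rw [LL_abscos_int]; push_cast; field_simp; simp [hn0]; rw [show (2:ℝ) * n * 2 = 4 * n by ring, mul_comm 4, ← mul_assoc, inv_mul_cancel₀ hn0, one_mul]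

theorem LL_int_cos (n : ℕ) (hn : 1 ≤ n) (δ : ℝ) :
    ∫ t in (0:ℝ)..(2*π), Real.cos (n*t - δ) = 0 := by
  have hn0 : (n:ℝ) ≠ 0 := by positivity
  calc ∫ t in (0:ℝ)..(2*π), Real.cos (n*t - δ)
      = ((n:ℝ)⁻¹) • ∫ y in ((n:ℝ)*0)..((n:ℝ)*(2*π)), (fun y => Real.cos (y - δ)) y :=
        intervalIntegral.integral_comp_mul_left (fun y => Real.cos (y - δ)) hn0
    _ = ((n:ℝ)⁻¹) • ∫ x in ((n:ℝ)*0 - δ)..((n:ℝ)*(2*π) - δ), Real.cos x := by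
        rw [intervalIntegral.integral_comp_sub_right (fun y => Real.cos y) δ]
    _ = ((n:ℝ)⁻¹) • ((n : ℤ) • ∫ x in (0:ℝ)..(2*π), Real.cos x) := by
        have h3 : (n:ℝ)*(2*π) - δ = ((n:ℝ)*0 - δ) + (n : ℤ) • (2*π) := by
          rw [zsmul_eq_mul]; push_cast; ring
        rw [h3, Real.cos_periodic.intervalIntegral_add_zsmul_eq n _
          (fun t₁ t₂ => Real.continuous_cos.intervalIntegrable t₁ t₂),
          Real.cos_periodic.intervalIntegral_add_eq ((n:ℝ)*0 - δ) 0, zero_add]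
    _ = 0 := by simp [integral_cos]

theorem LL_derivs (u : ℝ → ℝ) (hu : ContDiff ℝ 2 u) :
    Differentiable ℝ u ∧ Differentiable ℝ (deriv u) ∧ Continuous (deriv (deriv u)) := by
  have h2 : ContDiff ℝ (1 + 1) u := by convert hu using 2; exact one_add_one_eq_two
  rw [contDiff_succ_iff_deriv] at h2
  have h1 : ContDiff ℝ (0 + 1) (deriv u) := by simpa using h2.2.2
  rw [contDiff_succ_iff_deriv] at h1
  exact ⟨h2.1, h1.1, h1.2.2.continuous⟩

theorem LL_periodic_deriv (u : ℝ → ℝ) (hup : Function.Periodic u (2*π)) :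
    Function.Periodic (deriv u) (2*π) := by
  intro x
  have h : (fun y => u (y + 2*π)) = u := by ext y; exact hup y
  calc deriv u (x + 2*π) = deriv (fun y => u (y + 2*π)) x := (deriv_comp_add_const u (2*π) x).symm
    _ = deriv u x := by rw [h]

theorem LL_orth (n : ℕ) (hn : 1 ≤ n) (u : ℝ → ℝ) (hu : ContDiff ℝ 2 u)
    (hup : Function.Periodic u (2*π)) (δ : ℝ) :
    ∫ t in (0:ℝ)..(2*π), (deriv (deriv u) t + (n:ℝ)^2 * u t) * Real.cos (n*t - δ) = 0 := by
  obtain ⟨hd1, hd2, hc3⟩ := LL_derivs u hu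
  set F : ℝ → ℝ := fun t => deriv u t * Real.cos (n*t - δ) + n * u t * Real.sin (n*t - δ) with hF
  have hFd : ∀ t, HasDerivAt F ((deriv (deriv u) t + (n:ℝ)^2 * u t) * Real.cos (n*t - δ)) t := by
    intro t
    have h1 : HasDerivAt (fun t : ℝ => (n:ℝ)*t - δ) n t := by
      simpa using ((hasDerivAt_id t).const_mul (n:ℝ)).sub_const δ
    have hcos : HasDerivAt (fun t : ℝ => Real.cos (n*t - δ)) (-Real.sin (n*t - δ) * n) t :=
      (Real.hasDerivAt_cos _).comp t h1
    have hsin : HasDerivAt (fun t : ℝ => Real.sin (n*t - δ)) (Real.cos (n*t - δ) * n) t :=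
      (Real.hasDerivAt_sin _).comp t h1
    have hu' : HasDerivAt u (deriv u t) t := (hd1 t).hasDerivAt
    have hu'' : HasDerivAt (deriv u) (deriv (deriv u) t) t := (hd2 t).hasDerivAt
    have key := (hu''.mul hcos).add ((hu'.const_mul (n:ℝ)).mul hsin)
    exact key.congr_deriv (by ring)
  have key := intervalIntegral.integral_eq_sub_of_hasDerivAt (a := 0) (b := 2*π)
    (fun t _ => hFd t) ?_
  · rw [key]
    have h1 : deriv u (0 + 2*π) = deriv u 0 := LL_periodic_deriv u hup 0
    have h2 : u (0 + 2*π) = u 0 := hup 0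
    rw [zero_add] at h1 h2
    have hc : Real.cos ((n:ℝ)*(2*π) - δ) = Real.cos ((n:ℝ)*0 - δ) := by
      rw [Real.cos_nat_mul_two_pi_sub]; norm_num [Real.cos_neg]
    have hs : Real.sin ((n:ℝ)*(2*π) - δ) = Real.sin ((n:ℝ)*0 - δ) := by
      rw [Real.sin_nat_mul_two_pi_sub]; norm_num [Real.sin_neg]
    simp only [hF, h1, h2, hc, hs]
    ring
  · exact ((hc3.add (continuous_const.mul hd1.continuous)).mul
      (Real.continuous_cos.comp (by continuity))).intervalIntegrable _ _

set_option maxHeartbeats 1000000 in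
theorem stmt_4 (g : ℝ → ℝ) (hgc : Continuous g) (gm gp : ℝ)
    (hgm : Filter.Tendsto g Filter.atBot (nhds gm))
    (hgp : Filter.Tendsto g Filter.atTop (nhds gp))
    (hb : ∀ u : ℝ, gm < g u ∧ g u < gp)
    (n : ℕ) (hn : 1 ≤ n)
    (f : ℝ → ℝ) (hfc : Continuous f) (hfp : Function.Periodic f (2*π))
    (u : ℝ → ℝ) (hu : ContDiff ℝ 2 u) (hup : Function.Periodic u (2*π))
    (heq : ∀ t : ℝ, deriv (deriv u) t + (n:ℝ)^2 * u t + g (u t) = f t)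
    (A B : ℝ)
    (hA : A = ∫ t in (0:ℝ)..(2*π), f t * Real.cos (n*t))
    (hB : B = ∫ t in (0:ℝ)..(2*π), f t * Real.sin (n*t)) :
    Real.sqrt (A^2 + B^2) < 2 * (gp - gm) := by
  obtain ⟨hd1, hd2, hc3⟩ := LL_derivs u hu
  have hgpgm : gm < gp := lt_trans (hb 0).1 (hb 0).2
  have hgu : Continuous (fun t => g (u t)) := hgc.comp hu.continuous
  have hpi : (0:ℝ) < 2*π := by positivity
  -- the key strict inequality, for any δ
  have main : ∀ δ : ℝ, ∫ t in (0:ℝ)..(2*π), g (u t) * Real.cos (n*t - δ) < 2 * (gp - gm) := by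
    intro δ
    set c : ℝ → ℝ := fun t => Real.cos (n*t - δ) with hcdef
    have hcc : Continuous c := by continuity
    have hmaxint : ∫ t in (0:ℝ)..(2*π), max (c t) 0 = 2 := by
      have he : ∀ t, max (c t) 0 = (c t + |c t|)/2 := by
        intro t; rcases le_total (c t) 0 with h | h
        · rw [max_eq_right h, abs_of_nonpos h]; ring
        · rw [max_eq_left h, abs_of_nonneg h]; ring
      rw [intervalIntegral.integral_congr (g := fun t => (c t + |c t|)/2)
        (fun t _ => he t)]
      rw [intervalIntegral.integral_div, intervalIntegral.integral_add
        (hcc.intervalIntegrable _ _) (hcc.abs.intervalIntegrable _ _)]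
      rw [LL_int_cos n hn δ, LL_int_abs_cos n hn δ]
      norm_num
    have hminint : ∫ t in (0:ℝ)..(2*π), min (c t) 0 = -2 := by
      have he : ∀ t, min (c t) 0 = (c t - |c t|)/2 := by
        intro t; rcases le_total (c t) 0 with h | h
        · rw [min_eq_left h, abs_of_nonpos h]; ring
        · rw [min_eq_right h, abs_of_nonneg h]; ring
      rw [intervalIntegral.integral_congr (g := fun t => (c t - |c t|)/2)
        (fun t _ => he t)]
      rw [intervalIntegral.integral_div, intervalIntegral.integral_sub
        (hcc.intervalIntegrable _ _) (hcc.abs.intervalIntegrable _ _)]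
      rw [LL_int_cos n hn δ, LL_int_abs_cos n hn δ]
      norm_num
    have hhint : ∫ t in (0:ℝ)..(2*π), (gp * max (c t) 0 + gm * min (c t) 0) = 2 * (gp - gm) := by
      rw [intervalIntegral.integral_add
        ((hcc.max continuous_const).intervalIntegrable _ _ |>.const_mul gp)
        ((hcc.min continuous_const).intervalIntegrable _ _ |>.const_mul gm)]
      rw [intervalIntegral.integral_const_mul, intervalIntegral.integral_const_mul,
        hmaxint, hminint]
      ring
    rw [← hhint]
    apply intervalIntegral.integral_lt_integral_of_continuousOn_of_le_of_exists_lt hpi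
    · exact (hgu.mul hcc).continuousOn
    · exact ((continuous_const.mul (hcc.max continuous_const)).add
        (continuous_const.mul (hcc.min continuous_const))).continuousOn
    · intro t _
      obtain ⟨h1, h2⟩ := hb (u t)
      rcases le_total (c t) 0 with h | h
      · rw [max_eq_right h, min_eq_left h]
        nlinarith
      · rw [max_eq_left h, min_eq_right h]
        nlinarith
    · -- a point where the inequality is strict
      have hstrict : ∀ t, c t ≠ 0 →
          g (u t) * c t < gp * max (c t) 0 + gm * min (c t) 0 := by
        intro t hct
        obtain ⟨h1, h2⟩ := hb (u t)
        rcases lt_or_gt_of_ne hct with h | h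
        · rw [max_eq_right h.le, min_eq_left h.le]
          nlinarith
        · rw [max_eq_left h.le, min_eq_right h.le]
          nlinarith
      by_cases hc0 : c 0 = 0
      · refine ⟨π/(2*n), ⟨by positivity, ?_⟩, hstrict _ ?_⟩
        · have hn1 : (1:ℝ) ≤ n := by exact_mod_cast hn
          have : π/(2*(n:ℝ)) ≤ π/2 := by
            apply div_le_div_of_nonneg_left pi_pos.le (by norm_num) (by linarith)
          linarith [pi_pos]
        · have hn0 : (n:ℝ) ≠ 0 := by positivity
          have harg : (n:ℝ) * (π/(2*n)) - δ = π/2 - δ := by field_simp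
          have hc0' : Real.cos δ = 0 := by
            have : (n:ℝ) * 0 - δ = -δ := by ring
            simpa [hcdef, this, Real.cos_neg] using hc0
          have hsin : Real.sin δ ≠ 0 := by
            intro hs
            have := Real.sin_sq_add_cos_sq δ
            rw [hs, hc0'] at this; norm_num at this
          simp only [hcdef, harg, Real.cos_pi_div_two_sub]
          exact hsin
      · exact ⟨0, ⟨le_refl 0, by linarith⟩, hstrict 0 hc0⟩
  -- express A and B via g ∘ u
  have hiint : ∀ δ : ℝ, IntervalIntegrable
      (fun t => (deriv (deriv u) t + (n:ℝ)^2 * u t) * Real.cos (n*t - δ))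
      MeasureTheory.volume 0 (2*π) :=
    fun δ => ((hc3.add (continuous_const.mul hu.continuous)).mul
      (Real.continuous_cos.comp (by continuity))).intervalIntegrable _ _
  have hgint : ∀ δ : ℝ, IntervalIntegrable (fun t => g (u t) * Real.cos (n*t - δ))
      MeasureTheory.volume 0 (2*π) :=
    fun δ => (hgu.mul (Real.continuous_cos.comp (by continuity))).intervalIntegrable _ _
  have hAB : ∀ δ : ℝ, (∫ t in (0:ℝ)..(2*π), f t * Real.cos (n*t - δ))
      = ∫ t in (0:ℝ)..(2*π), g (u t) * Real.cos (n*t - δ) := by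
    intro δ
    have : (∫ t in (0:ℝ)..(2*π), f t * Real.cos (n*t - δ))
        = ∫ t in (0:ℝ)..(2*π),
          ((deriv (deriv u) t + (n:ℝ)^2 * u t) * Real.cos (n*t - δ)
            + g (u t) * Real.cos (n*t - δ)) := by
      apply intervalIntegral.integral_congr
      intro t _
      dsimp only
      rw [← heq t]; ring
    rw [this, intervalIntegral.integral_add (hiint δ) (hgint δ), LL_orth n hn u hu hup δ,
      zero_add]
  -- done with preliminaries; now the main argument
  by_cases hz : A = 0 ∧ B = 0
  · rw [hz.1, hz.2]
    norm_num
    linarith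
  · set R : ℝ := Real.sqrt (A^2 + B^2) with hR
    have hRpos : 0 < R := Real.sqrt_pos.mpr (by
      rcases not_and_or.mp hz with h | h
      · nlinarith [sq_nonneg B, (sq_pos_iff (a := A)).mpr h]
      · nlinarith [sq_nonneg A, (sq_pos_iff (a := B)).mpr h])
    set z : ℂ := ⟨A, B⟩ with hzdef
    have hzne : z ≠ 0 := by
      intro h
      rw [Complex.ext_iff] at h
      exact hz ⟨h.1, h.2⟩
    have habs : ‖z‖ = R := by
      rw [Complex.norm_def, Complex.normSq_mk, hR]
      ring_nf
    set δ : ℝ := Complex.arg z with hδ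
    have hcosδ : Real.cos δ = A / R := by
      rw [hδ, Complex.cos_arg hzne, habs]
    have hsinδ : Real.sin δ = B / R := by
      rw [hδ, Complex.sin_arg, habs]
    have hcomb : (∫ t in (0:ℝ)..(2*π), f t * Real.cos (n*t - δ)) = R := by
      have hsplit : (∫ t in (0:ℝ)..(2*π), f t * Real.cos (n*t - δ))
          = Real.cos δ * (∫ t in (0:ℝ)..(2*π), f t * Real.cos (n*t))
            + Real.sin δ * (∫ t in (0:ℝ)..(2*π), f t * Real.sin (n*t)) := by
        rw [← intervalIntegral.integral_const_mul, ← intervalIntegral.integral_const_mul,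
          ← intervalIntegral.integral_add (f := fun x => Real.cos δ * (f x * Real.cos (n*x)))
            (g := fun x => Real.sin δ * (f x * Real.sin (n*x)))
            (((hfc.mul (by continuity)).intervalIntegrable _ _).const_mul _)
            (((hfc.mul (by continuity)).intervalIntegrable _ _).const_mul _)]
        apply intervalIntegral.integral_congr
        intro t _
        dsimp only
        rw [Real.cos_sub]
        ring
      rw [hsplit, ← hA, ← hB, hcosδ, hsinδ]
      field_simp
      rw [hR, Real.sq_sqrt (by positivity)]
    calc R = ∫ t in (0:ℝ)..(2*π), g (u t) * Real.cos (n*t - δ) := by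
            rw [← hcomb, hAB δ]
      _ < 2 * (gp - gm) := main δ
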